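/- Let d ≥ 1, let T_1 < T_2 be positive reals, η_1, η_2 > 0, η = η_1 + η_2 and T_∞ = (η_1 T_1 + η_2 T_2)/η. Define g : ℝ^d → ℝ by g(v) = ∫_{T_1}^{T_2} w(T) m_T(v) dT. Then g is twice continuously differentiable and for every v ∈ ℝ^d, T_∞ Δg(v) + div_v(v g(v)) + η_1 m_{T_1}(v) + η_2 m_{T_2}(v) − η g(v) = 0, where Δ is the Laplacian in v and div_v(v g(v)) = v·∇g(v) + d g(v). -/

import Mathlib

open MeasureTheory

/-- The centered Maxwellian (Gaussian) probability density at temperature `T` on `ℝᵈ`. -/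
noncomputable def maxwellian (d : ℕ) (T : ℝ) (v : EuclideanSpace ℝ (Fin d)) : ℝ :=
  (2 * Real.pi * T) ^ (-(d : ℝ) / 2) * Real.exp (-‖v‖ ^ 2 / (2 * T))

/-- Partial derivative of `f` in the `i`-th coordinate direction at `v`. -/
noncomputable def coordDeriv (d : ℕ) (f : EuclideanSpace ℝ (Fin d) → ℝ) (i : Fin d)
    (v : EuclideanSpace ℝ (Fin d)) : ℝ :=
  deriv (fun t : ℝ => f (v + t • EuclideanSpace.single i (1 : ℝ))) 0

/-- The Laplacian of `f` at `v`: the sum of the second derivatives along the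
coordinate directions. -/
noncomputable def lap (d : ℕ) (f : EuclideanSpace ℝ (Fin d) → ℝ)
    (v : EuclideanSpace ℝ (Fin d)) : ℝ :=
  ∑ i : Fin d, iteratedDeriv 2 (fun t : ℝ => f (v + t • EuclideanSpace.single i (1 : ℝ))) 0

/-- The temperature density `w` of Theorem 2.2 (steady state formula). -/
noncomputable def wdens (η₁ η₂ T₁ T₂ : ℝ) (T : ℝ) : ℝ :=
  if T < (η₁ * T₁ + η₂ * T₂) / (η₁ + η₂) then
    (η₁ / 2) * ((η₁ * T₁ + η₂ * T₂) / (η₁ + η₂) - T₁) ^ (-(η₁ + η₂) / 2) *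
      ((η₁ * T₁ + η₂ * T₂) / (η₁ + η₂) - T) ^ ((η₁ + η₂) / 2 - 1)
  else if T = (η₁ * T₁ + η₂ * T₂) / (η₁ + η₂) then 0
  else
    (η₂ / 2) * (T₂ - (η₁ * T₁ + η₂ * T₂) / (η₁ + η₂)) ^ (-(η₁ + η₂) / 2) *
      (T - (η₁ * T₁ + η₂ * T₂) / (η₁ + η₂)) ^ ((η₁ + η₂) / 2 - 1)

/-! ### Auxiliary development -/

noncomputable section FPsection
namespace FP

open MeasureTheory Real Set

/-- 1-D profile of the Maxwellian: `q d T s = (2πT)^{-d/2} e^{-s/(2T)}`. -/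
def q (d : ℕ) (T s : ℝ) : ℝ := (2 * Real.pi * T) ^ (-(d:ℝ)/2) * Real.exp (-s / (2*T))

lemma q_pos {d : ℕ} {T : ℝ} (hT : 0 < T) (s : ℝ) : 0 < q d T s :=
  mul_pos (Real.rpow_pos_of_pos (by positivity) _) (Real.exp_pos _)

lemma hasDerivAt_q_s (d : ℕ) {T : ℝ} (hT : 0 < T) (s : ℝ) :
    HasDerivAt (fun s => q d T s) (q d T s * (-1/(2*T))) s := by
  have h : HasDerivAt (fun s : ℝ => -s / (2*T)) (-1/(2*T)) s := by
    simpa using ((hasDerivAt_id s).neg.div_const (2*T))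
  have := (h.exp).const_mul ((2 * Real.pi * T) ^ (-(d:ℝ)/2))
  simpa [q, mul_assoc, mul_comm, mul_left_comm] using this

lemma hasDerivAt_q_T (d : ℕ) {T : ℝ} (hT : 0 < T) (s : ℝ) :
    HasDerivAt (fun T => q d T s) (q d T s * (s/(2*T^2) - d/(2*T))) T := by
  have h2T : (2 * Real.pi * T) ≠ 0 := by positivity
  have h1 : HasDerivAt (fun T : ℝ => (2 * Real.pi * T) ^ (-(d:ℝ)/2))
      ((-(d:ℝ)/2) * (2 * Real.pi * T) ^ (-(d:ℝ)/2 - 1) * (2 * Real.pi)) T := by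
    have := (Real.hasDerivAt_rpow_const (p := -(d:ℝ)/2) (Or.inl h2T)).comp T
      ((hasDerivAt_id T).const_mul (2 * Real.pi))
    simpa [Function.comp_def, mul_comm, mul_assoc, mul_left_comm] using this
  have h2 : HasDerivAt (fun T : ℝ => Real.exp (-s / (2*T)))
      (Real.exp (-s / (2*T)) * (s / (2*T^2))) T := by
    have hinv : HasDerivAt (fun T : ℝ => -s/2 * T⁻¹) (-s/2 * (-(T^2)⁻¹)) T := by
      simpa using (hasDerivAt_inv (ne_of_gt hT)).const_mul (-s/2)
    have heq : (fun T : ℝ => Real.exp (-s / (2*T))) = fun x => Real.exp (-s/2 * x⁻¹) := by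
      funext x; congr 1; ring
    rw [heq]
    convert hinv.exp using 1
    congr 1
    · congr 1; ring
    · field_simp
  have := h1.mul h2
  have hr : (-(d:ℝ)/2) * (2 * Real.pi * T) ^ (-(d:ℝ)/2 - 1) * (2 * Real.pi)
      = (2 * Real.pi * T) ^ (-(d:ℝ)/2) * (-(d:ℝ)/(2*T)) := by
    rw [Real.rpow_sub (by positivity), Real.rpow_one]
    field_simp
  rw [hr] at this
  exact this.congr_deriv (by rw [q]; ring)


section Wlemmas
variable {T₁ T₂ η₁ η₂ : ℝ}

lemma lt_Tinf (hη₁ : 0 < η₁) (hη₂ : 0 < η₂) (hT₁₂ : T₁ < T₂) :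
    T₁ < (η₁ * T₁ + η₂ * T₂) / (η₁ + η₂) := by
  rw [lt_div_iff₀ (by positivity)]; nlinarith

lemma Tinf_lt (hη₁ : 0 < η₁) (hη₂ : 0 < η₂) (hT₁₂ : T₁ < T₂) :
    (η₁ * T₁ + η₂ * T₂) / (η₁ + η₂) < T₂ := by
  rw [div_lt_iff₀ (by positivity)]; nlinarith

lemma wdens_nonneg (hη₁ : 0 < η₁) (hη₂ : 0 < η₂) (hT₁₂ : T₁ < T₂) (T : ℝ) :
    0 ≤ wdens η₁ η₂ T₁ T₂ T := by
  unfold wdens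
  split_ifs with h1 h2
  · have h3 : (0:ℝ) < (η₁ * T₁ + η₂ * T₂) / (η₁ + η₂) - T₁ := by
      have := lt_Tinf hη₁ hη₂ hT₁₂; linarith
    have h4 : (0:ℝ) < (η₁ * T₁ + η₂ * T₂) / (η₁ + η₂) - T := by linarith
    positivity
  · exact le_rfl
  · have h3 : (0:ℝ) < T₂ - (η₁ * T₁ + η₂ * T₂) / (η₁ + η₂) := by
      have := Tinf_lt hη₁ hη₂ hT₁₂; linarith
    have h4 : (0:ℝ) < T - (η₁ * T₁ + η₂ * T₂) / (η₁ + η₂) := by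
      rcases lt_or_eq_of_le (not_lt.mp h1) with h | h
      · linarith
      · exact absurd h.symm h2
    positivity

lemma measurable_wdens : Measurable (wdens η₁ η₂ T₁ T₂) := by
  unfold wdens
  apply Measurable.ite (measurableSet_lt measurable_id measurable_const)
  · fun_prop
  · apply Measurable.ite (measurableSet_eq_fun measurable_id measurable_const)
    · fun_prop
    · fun_prop

lemma intervalIntegrable_wdens (hη₁ : 0 < η₁) (hη₂ : 0 < η₂) (hT₁₂ : T₁ < T₂) :
    IntervalIntegrable (wdens η₁ η₂ T₁ T₂) volume T₁ T₂ := by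
  set Ti := (η₁ * T₁ + η₂ * T₂) / (η₁ + η₂) with hTi
  have h1 : T₁ < Ti := lt_Tinf hη₁ hη₂ hT₁₂
  have h2 : Ti < T₂ := Tinf_lt hη₁ hη₂ hT₁₂
  have hp : (-1:ℝ) < (η₁ + η₂)/2 - 1 := by nlinarith
  have hL : IntervalIntegrable (wdens η₁ η₂ T₁ T₂) volume T₁ Ti := by
    have h0 : IntervalIntegrable (fun x : ℝ => x ^ ((η₁ + η₂)/2 - 1)) volume (Ti - T₁) 0 :=
      intervalIntegral.intervalIntegrable_rpow' hp
    have h3 := (h0.comp_sub_left Ti).const_mul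
      ((η₁ / 2) * (Ti - T₁) ^ (-(η₁ + η₂) / 2))
    rw [show Ti - (Ti - T₁) = T₁ by ring, sub_zero] at h3
    rw [intervalIntegrable_iff, uIoc_of_le h1.le] at h3 ⊢
    have h4 : IntegrableOn (fun T => η₁ / 2 * (Ti - T₁) ^ (-(η₁ + η₂) / 2) *
        (Ti - T) ^ ((η₁ + η₂)/2 - 1)) (Set.Ioo T₁ Ti) volume :=
      h3.mono_set Set.Ioo_subset_Ioc_self
    have h5 : IntegrableOn (wdens η₁ η₂ T₁ T₂) (Set.Ioo T₁ Ti) volume := by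
      apply h4.congr_fun ?_ measurableSet_Ioo
      intro T hT
      rw [wdens, if_pos hT.2]
    exact h5.congr_set_ae Ioo_ae_eq_Ioc.symm
  have hR : IntervalIntegrable (wdens η₁ η₂ T₁ T₂) volume Ti T₂ := by
    have h0 : IntervalIntegrable (fun x : ℝ => x ^ ((η₁ + η₂)/2 - 1)) volume 0 (T₂ - Ti) :=
      intervalIntegral.intervalIntegrable_rpow' hp
    have h3 := (h0.comp_sub_right Ti).const_mul
      ((η₂ / 2) * (T₂ - Ti) ^ (-(η₁ + η₂) / 2))
    rw [zero_add, sub_add_cancel] at h3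
    rw [intervalIntegrable_iff, uIoc_of_le h2.le] at h3 ⊢
    apply h3.congr_fun ?_ measurableSet_Ioc
    intro T hT
    rw [wdens, if_neg (by exact not_lt.mpr hT.1.le), if_neg (by exact ne_of_gt hT.1)]
  exact hL.trans hR


end Wlemmas

section Qlemmas
variable {d : ℕ} {T₁ T₂ η₁ η₂ : ℝ}

lemma continuousOn_qk (hT₁ : 0 < T₁) (hT₁₂ : T₁ < T₂) (k : ℕ) (s : ℝ) :
    ContinuousOn (fun T => (-1/(2*T))^k * q d T s) (Set.uIcc T₁ T₂) := by
  have hpos : ∀ T ∈ Set.uIcc T₁ T₂, 0 < T := by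
    intro T hT
    rw [Set.uIcc_of_le hT₁₂.le] at hT
    linarith [hT.1]
  have hne : ∀ T ∈ Set.uIcc T₁ T₂, (2*T : ℝ) ≠ 0 := fun T hT => by
    have := hpos T hT; positivity
  have c1 : ContinuousOn (fun T : ℝ => -1/(2*T)) (Set.uIcc T₁ T₂) :=
    continuousOn_const.div ((continuous_const.mul continuous_id).continuousOn) hne
  have c2 : ContinuousOn (fun T : ℝ => (2*Real.pi*T) ^ (-(d:ℝ)/2)) (Set.uIcc T₁ T₂) := by
    apply ContinuousOn.rpow_const ((continuous_const.mul continuous_id).continuousOn)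
    intro T hT
    have := hpos T hT
    exact Or.inl (show 2 * Real.pi * T ≠ 0 by positivity)
  have c3 : ContinuousOn (fun T : ℝ => Real.exp (-s/(2*T))) (Set.uIcc T₁ T₂) :=
    Real.continuous_exp.comp_continuousOn
      (continuousOn_const.div ((continuous_const.mul continuous_id).continuousOn) hne)
  exact (c1.pow k).mul (c2.mul c3)


def Qk (d : ℕ) (η₁ η₂ T₁ T₂ : ℝ) (k : ℕ) (T s : ℝ) : ℝ :=
  wdens η₁ η₂ T₁ T₂ T * (-1/(2*T))^k * q d T s

def Gk (d : ℕ) (η₁ η₂ T₁ T₂ : ℝ) (k : ℕ) (s : ℝ) : ℝ :=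
  ∫ T in T₁..T₂, Qk d η₁ η₂ T₁ T₂ k T s

/-- The integrand of the steady-state identity. -/
def P (d : ℕ) (η₁ η₂ T₁ T₂ : ℝ) (T s : ℝ) : ℝ :=
  wdens η₁ η₂ T₁ T₂ T * (2*((η₁ * T₁ + η₂ * T₂) / (η₁ + η₂) - T) *
    (q d T s * (s/(2*T^2) - (d:ℝ)/(2*T))) - (η₁ + η₂) * q d T s)


lemma continuousOn_q' {S : Set ℝ} (hS : ∀ T ∈ S, 0 < T) (s : ℝ) :
    ContinuousOn (fun T => q d T s) S := by
  have hne : ∀ T ∈ S, (2*T : ℝ) ≠ 0 := fun T hT => by have := hS T hT; positivity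
  have c2 : ContinuousOn (fun T : ℝ => (2*Real.pi*T) ^ (-(d:ℝ)/2)) S := by
    apply ContinuousOn.rpow_const ((continuous_const.mul continuous_id).continuousOn)
    intro T hT
    have := hS T hT
    exact Or.inl (show 2 * Real.pi * T ≠ 0 by positivity)
  have c3 : ContinuousOn (fun T : ℝ => Real.exp (-s/(2*T))) S :=
    Real.continuous_exp.comp_continuousOn
      (continuousOn_const.div ((continuous_const.mul continuous_id).continuousOn) hne)
  exact c2.mul c3

lemma continuousOn_qfac {S : Set ℝ} (hS : ∀ T ∈ S, 0 < T) (s c : ℝ) :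
    ContinuousOn (fun T => 2*(c - T) * (q d T s * (s/(2*T^2) - (d:ℝ)/(2*T)))
      - (η₁ + η₂) * q d T s) S := by
  have hq := continuousOn_q' (d := d) hS s
  have hne : ∀ T ∈ S, (2*T^2 : ℝ) ≠ 0 := fun T hT => by have := hS T hT; positivity
  have hne' : ∀ T ∈ S, (2*T : ℝ) ≠ 0 := fun T hT => by have := hS T hT; positivity
  exact (((continuous_const.mul (continuous_const.sub continuous_id)).continuousOn).mul
    (hq.mul ((continuousOn_const.div (by fun_prop) hne).sub
      (continuousOn_const.div (by fun_prop) hne')))).sub (continuousOn_const.mul hq)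


variable (hT₁ : 0 < T₁) (hT₁₂ : T₁ < T₂) (hη₁ : 0 < η₁) (hη₂ : 0 < η₂)
include hT₁ hT₁₂ hη₁ hη₂

lemma intervalIntegrable_Qk (k : ℕ) (s : ℝ) :
    IntervalIntegrable (fun T => Qk d η₁ η₂ T₁ T₂ k T s) volume T₁ T₂ := by
  have h := (intervalIntegrable_wdens hη₁ hη₂ hT₁₂).mul_continuousOn
    (continuousOn_qk (d := d) hT₁ hT₁₂ k s)
  have : (fun T => Qk d η₁ η₂ T₁ T₂ k T s)
      = fun T => wdens η₁ η₂ T₁ T₂ T * ((-1/(2*T))^k * q d T s) := by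
    funext T; rw [Qk]; ring
  rw [this]; exact h

lemma measurable_Qk (k : ℕ) (s : ℝ) :
    AEStronglyMeasurable (fun T => Qk d η₁ η₂ T₁ T₂ k T s)
      (volume.restrict (Set.uIoc T₁ T₂)) := by
  apply Measurable.aestronglyMeasurable
  unfold Qk q
  exact ((measurable_wdens.mul (by fun_prop)).mul (by fun_prop))

lemma hasDerivAt_Gk (k : ℕ) (s : ℝ) :
    HasDerivAt (fun x => Gk d η₁ η₂ T₁ T₂ k x) (Gk d η₁ η₂ T₁ T₂ (k+1) s) s := by
  have key := intervalIntegral.hasDerivAt_integral_of_dominated_loc_of_deriv_le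
    (F := fun x T => Qk d η₁ η₂ T₁ T₂ k T x)
    (F' := fun x T => Qk d η₁ η₂ T₁ T₂ (k+1) T x)
    (bound := fun T => wdens η₁ η₂ T₁ T₂ T *
      ((1/(2*T₁))^(k+1) * ((2*Real.pi*T₁) ^ (-(d:ℝ)/2) * Real.exp ((|s|+1)/(2*T₁)))))
    (μ := volume) (a := T₁) (b := T₂) (x₀ := s) (Metric.ball_mem_nhds s one_pos)
    (Filter.Eventually.of_forall fun x => measurable_Qk hT₁ hT₁₂ hη₁ hη₂ k x)
    (intervalIntegrable_Qk hT₁ hT₁₂ hη₁ hη₂ k s)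
    (measurable_Qk hT₁ hT₁₂ hη₁ hη₂ (k+1) s)
    ?_ ?_ ?_
  · exact key.2
  · -- bound
    apply Filter.Eventually.of_forall
    intro T hT x hx
    rw [Set.uIoc_of_le hT₁₂.le] at hT
    have hTpos : 0 < T := lt_trans hT₁ hT.1
    have hT1T : T₁ ≤ T := hT.1.le
    have hwnn := wdens_nonneg (T₁ := T₁) (T₂ := T₂) hη₁ hη₂ hT₁₂ T
    have hqpos := q_pos (d := d) hTpos x
    rw [Real.norm_eq_abs]
    simp only [Qk]
    rw [abs_mul, abs_mul, abs_of_nonneg hwnn, abs_pow,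
      abs_of_pos hqpos]
    have habs : |(-1/(2*T) : ℝ)| = 1/(2*T) := by
      rw [abs_div, abs_neg, abs_one, abs_of_pos (by positivity)]
    rw [habs]
    have hxb : |x| ≤ |s| + 1 := by
      have := mem_ball_iff_norm.mp hx
      rw [Real.norm_eq_abs] at this
      calc |x| = |s + (x - s)| := by ring_nf
        _ ≤ |s| + |x - s| := abs_add_le _ _
        _ ≤ |s| + 1 := by linarith
    have hq : q d T x ≤ (2*Real.pi*T₁) ^ (-(d:ℝ)/2) * Real.exp ((|s|+1)/(2*T₁)) := by
      rw [q]
      apply mul_le_mul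
      · exact Real.rpow_le_rpow_of_nonpos (by positivity)
          (by nlinarith [Real.pi_pos])
          (by have := Nat.cast_nonneg (α := ℝ) d; linarith)
      · apply Real.exp_le_exp.mpr
        have hnx : -x ≤ |s| + 1 := le_trans (neg_le_abs x) hxb
        exact div_le_div₀ (by positivity) hnx (by positivity) (by linarith)
      · positivity
      · positivity
    have hpow : (1/(2*T))^(k+1) ≤ (1/(2*T₁))^(k+1) := by
      apply pow_le_pow_left₀ (by positivity)
      apply div_le_div_of_nonneg_left one_pos.le (by positivity) (by linarith)
    calc wdens η₁ η₂ T₁ T₂ T * (1/(2*T))^(k+1) * q d T x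
        ≤ wdens η₁ η₂ T₁ T₂ T * (1/(2*T₁))^(k+1) *
          ((2*Real.pi*T₁) ^ (-(d:ℝ)/2) * Real.exp ((|s|+1)/(2*T₁))) := by
          apply mul_le_mul (mul_le_mul (le_refl _) hpow (by positivity) hwnn) hq
            (le_of_lt hqpos) (by positivity)
      _ = _ := by ring
  · exact (intervalIntegrable_wdens hη₁ hη₂ hT₁₂).mul_const _
  · -- differentiability
    apply Filter.Eventually.of_forall
    intro T hT x hx
    rw [Set.uIoc_of_le hT₁₂.le] at hT
    have hTpos : 0 < T := lt_trans hT₁ hT.1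
    have h := (hasDerivAt_q_s d hTpos x).const_mul
      (wdens η₁ η₂ T₁ T₂ T * (-1/(2*T))^k)
    exact h.congr_deriv (by simp only [Qk, pow_succ]; ring)


lemma intervalIntegrable_P {a b : ℝ} (hab : Set.uIcc a b ⊆ Set.uIcc T₁ T₂) (s : ℝ) :
    IntervalIntegrable (fun T => P d η₁ η₂ T₁ T₂ T s) volume a b := by
  have hw : IntervalIntegrable (wdens η₁ η₂ T₁ T₂) volume a b :=
    (intervalIntegrable_wdens hη₁ hη₂ hT₁₂).mono_set hab
  have hpos : ∀ T ∈ Set.uIcc a b, 0 < T := by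
    intro T hT
    have := hab hT
    rw [Set.uIcc_of_le hT₁₂.le] at this
    linarith [this.1]
  exact hw.mul_continuousOn (continuousOn_qfac hpos s _)

/-- FTC on the left piece. -/
lemma ibp_left (s : ℝ) :
    ∫ T in T₁..(η₁ * T₁ + η₂ * T₂) / (η₁ + η₂), P d η₁ η₂ T₁ T₂ T s
      = -(η₁ * q d T₁ s) := by
  set Ti := (η₁ * T₁ + η₂ * T₂) / (η₁ + η₂) with hTi
  have h1 : T₁ < Ti := lt_Tinf hη₁ hη₂ hT₁₂
  have h2 : Ti < T₂ := Tinf_lt hη₁ hη₂ hT₁₂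
  have hepos : (0:ℝ) < (η₁ + η₂)/2 := by positivity
  set e : ℝ := (η₁ + η₂)/2 with he
  set C : ℝ := η₁ * (Ti - T₁) ^ (-(η₁ + η₂)/2) with hC
  set F : ℝ → ℝ := fun T => C * ((Ti - T) ^ e * q d T s) with hF
  have hcont : ContinuousOn F (Set.Icc T₁ Ti) := by
    apply ContinuousOn.mul continuousOn_const
    apply ContinuousOn.mul
    · apply ContinuousOn.rpow_const (continuousOn_const.sub continuousOn_id)
      intro T hT
      rcases eq_or_lt_of_le hT.2 with h | h
      · exact Or.inr hepos.le
      · exact Or.inl (show Ti - T ≠ 0 by rw [sub_ne_zero]; exact ne_of_gt h)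
    · apply continuousOn_q' (fun T hT => lt_of_lt_of_le hT₁ hT.1) s
  have hderiv : ∀ T ∈ Set.Ioo T₁ Ti, HasDerivAt F (P d η₁ η₂ T₁ T₂ T s) T := by
    intro T hT
    have hTpos : 0 < T := lt_trans hT₁ hT.1
    have hTiT : 0 < Ti - T := by linarith [hT.2]
    have hrpow : HasDerivAt (fun T : ℝ => (Ti - T) ^ e) (e * (Ti - T) ^ (e-1) * (-1)) T := by
      have := (Real.hasDerivAt_rpow_const (x := Ti - T) (p := e)
        (Or.inl (ne_of_gt hTiT))).comp T ((hasDerivAt_id T).const_sub Ti)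
      simpa [Function.comp_def] using this
    have hq := hasDerivAt_q_T d hTpos s
    have hprod := (hrpow.mul hq).const_mul C
    have hwT : wdens η₁ η₂ T₁ T₂ T
        = (η₁ / 2) * (Ti - T₁) ^ (-(η₁ + η₂) / 2) * (Ti - T) ^ (e - 1) := by
      rw [wdens, if_pos hT.2]
    have hsplit : (Ti - T) ^ e = (Ti - T) ^ (e - 1) * (Ti - T) := by
      rw [show e = (e - 1) + 1 by ring, Real.rpow_add_one (ne_of_gt hTiT)]
      ring_nf
    exact hprod.congr_deriv (by rw [P, hwT, hsplit, hC]; ring)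
  have hint : IntervalIntegrable (fun T => P d η₁ η₂ T₁ T₂ T s) volume T₁ Ti := by
    apply intervalIntegrable_P hT₁ hT₁₂ hη₁ hη₂ ?_ s
    rw [Set.uIcc_of_le h1.le, Set.uIcc_of_le hT₁₂.le]
    exact Set.Icc_subset_Icc le_rfl h2.le
  have := intervalIntegral.integral_eq_sub_of_hasDerivAt_of_le h1.le hcont hderiv hint
  rw [this]
  show C * ((Ti - Ti) ^ e * q d Ti s) - C * ((Ti - T₁) ^ e * q d T₁ s) = -(η₁ * q d T₁ s)
  have hTT : (0:ℝ) < Ti - T₁ := by linarith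
  have key : C * (Ti - T₁) ^ e = η₁ := by
    rw [hC, mul_assoc, ← Real.rpow_add hTT,
      show -(η₁ + η₂) / 2 + e = 0 by rw [he]; ring, Real.rpow_zero, mul_one]
  rw [sub_self, Real.zero_rpow (ne_of_gt hepos), zero_mul, mul_zero, zero_sub, ← mul_assoc, key]


/-- FTC on the right piece. -/
lemma ibp_right (s : ℝ) :
    ∫ T in (η₁ * T₁ + η₂ * T₂) / (η₁ + η₂)..T₂, P d η₁ η₂ T₁ T₂ T s
      = -(η₂ * q d T₂ s) := by
  set Ti := (η₁ * T₁ + η₂ * T₂) / (η₁ + η₂) with hTi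
  have h1 : T₁ < Ti := lt_Tinf hη₁ hη₂ hT₁₂
  have h2 : Ti < T₂ := Tinf_lt hη₁ hη₂ hT₁₂
  have hepos : (0:ℝ) < (η₁ + η₂)/2 := by positivity
  set e : ℝ := (η₁ + η₂)/2 with he
  set C : ℝ := -η₂ * (T₂ - Ti) ^ (-(η₁ + η₂)/2) with hC
  set F : ℝ → ℝ := fun T => C * ((T - Ti) ^ e * q d T s) with hF
  have hcont : ContinuousOn F (Set.Icc Ti T₂) := by
    apply ContinuousOn.mul continuousOn_const
    apply ContinuousOn.mul
    · apply ContinuousOn.rpow_const (continuousOn_id.sub continuousOn_const)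
      intro T hT
      rcases eq_or_lt_of_le hT.1 with h | h
      · exact Or.inr hepos.le
      · exact Or.inl (show T - Ti ≠ 0 by rw [sub_ne_zero]; exact ne_of_gt h)
    · exact continuousOn_q' (fun T hT => lt_of_lt_of_le (lt_trans hT₁ h1) hT.1) s
  have hderiv : ∀ T ∈ Set.Ioo Ti T₂, HasDerivAt F (P d η₁ η₂ T₁ T₂ T s) T := by
    intro T hT
    have hTpos : 0 < T := lt_trans (lt_trans hT₁ h1) hT.1
    have hTiT : 0 < T - Ti := by linarith [hT.1]
    have hrpow : HasDerivAt (fun T : ℝ => (T - Ti) ^ e) (e * (T - Ti) ^ (e-1) * 1) T := by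
      have := (Real.hasDerivAt_rpow_const (x := T - Ti) (p := e)
        (Or.inl (ne_of_gt hTiT))).comp T ((hasDerivAt_id T).sub_const Ti)
      simpa [Function.comp_def] using this
    have hq := hasDerivAt_q_T d hTpos s
    have hprod := (hrpow.mul hq).const_mul C
    have hwT : wdens η₁ η₂ T₁ T₂ T
        = (η₂ / 2) * (T₂ - Ti) ^ (-(η₁ + η₂) / 2) * (T - Ti) ^ (e - 1) := by
      rw [wdens, if_neg (not_lt.mpr hT.1.le), if_neg (ne_of_gt hT.1)]
    have hsplit : (T - Ti) ^ e = (T - Ti) ^ (e - 1) * (T - Ti) := by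
      rw [show e = (e - 1) + 1 by ring, Real.rpow_add_one (ne_of_gt hTiT)]
      ring_nf
    exact hprod.congr_deriv (by rw [P, hwT, hsplit, hC]; ring)
  have hint : IntervalIntegrable (fun T => P d η₁ η₂ T₁ T₂ T s) volume Ti T₂ := by
    apply intervalIntegrable_P hT₁ hT₁₂ hη₁ hη₂ ?_ s
    rw [Set.uIcc_of_le h2.le, Set.uIcc_of_le hT₁₂.le]
    exact Set.Icc_subset_Icc h1.le le_rfl
  have := intervalIntegral.integral_eq_sub_of_hasDerivAt_of_le h2.le hcont hderiv hint
  rw [this]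
  show C * ((T₂ - Ti) ^ e * q d T₂ s) - C * ((Ti - Ti) ^ e * q d Ti s) = -(η₂ * q d T₂ s)
  have hTT : (0:ℝ) < T₂ - Ti := by linarith
  have key : C * (T₂ - Ti) ^ e = -η₂ := by
    rw [hC, mul_assoc, ← Real.rpow_add hTT,
      show -(η₁ + η₂) / 2 + e = 0 by rw [he]; ring, Real.rpow_zero, mul_one]
  rw [sub_self, Real.zero_rpow (ne_of_gt hepos), zero_mul, mul_zero, sub_zero, ← mul_assoc, key]
  ring

lemma ibp_total (s : ℝ) :
    ∫ T in T₁..T₂, P d η₁ η₂ T₁ T₂ T s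
      = -(η₁ * q d T₁ s) - η₂ * q d T₂ s := by
  have h1 : T₁ < (η₁ * T₁ + η₂ * T₂) / (η₁ + η₂) := lt_Tinf hη₁ hη₂ hT₁₂
  have h2 : (η₁ * T₁ + η₂ * T₂) / (η₁ + η₂) < T₂ := Tinf_lt hη₁ hη₂ hT₁₂
  have hL : IntervalIntegrable (fun T => P d η₁ η₂ T₁ T₂ T s) volume T₁
      ((η₁ * T₁ + η₂ * T₂) / (η₁ + η₂)) := by
    apply intervalIntegrable_P hT₁ hT₁₂ hη₁ hη₂ ?_ s
    rw [Set.uIcc_of_le h1.le, Set.uIcc_of_le hT₁₂.le]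
    exact Set.Icc_subset_Icc le_rfl h2.le
  have hR : IntervalIntegrable (fun T => P d η₁ η₂ T₁ T₂ T s) volume
      ((η₁ * T₁ + η₂ * T₂) / (η₁ + η₂)) T₂ := by
    apply intervalIntegrable_P hT₁ hT₁₂ hη₁ hη₂ ?_ s
    rw [Set.uIcc_of_le h2.le, Set.uIcc_of_le hT₁₂.le]
    exact Set.Icc_subset_Icc h1.le le_rfl
  rw [← intervalIntegral.integral_add_adjacent_intervals hL hR,
    ibp_left hT₁ hT₁₂ hη₁ hη₂ s, ibp_right hT₁ hT₁₂ hη₁ hη₂ s]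
  ring


lemma lin (s : ℝ) :
    (η₁ * T₁ + η₂ * T₂) / (η₁ + η₂) *
        (4*s*Gk d η₁ η₂ T₁ T₂ 2 s + 2*(d:ℝ)*Gk d η₁ η₂ T₁ T₂ 1 s)
      + 2*s*Gk d η₁ η₂ T₁ T₂ 1 s + (d:ℝ) * Gk d η₁ η₂ T₁ T₂ 0 s
      - (η₁+η₂) * Gk d η₁ η₂ T₁ T₂ 0 s
      = ∫ T in T₁..T₂, P d η₁ η₂ T₁ T₂ T s := by
  have h2 := intervalIntegrable_Qk hT₁ hT₁₂ hη₁ hη₂ (d := d) 2 s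
  have h1 := intervalIntegrable_Qk hT₁ hT₁₂ hη₁ hη₂ (d := d) 1 s
  have h0 := intervalIntegrable_Qk hT₁ hT₁₂ hη₁ hη₂ (d := d) 0 s
  have key : ∫ T in T₁..T₂, P d η₁ η₂ T₁ T₂ T s
      = ∫ T in T₁..T₂, (((η₁ * T₁ + η₂ * T₂) / (η₁ + η₂)*(4*s)) * Qk d η₁ η₂ T₁ T₂ 2 T s
        + ((η₁ * T₁ + η₂ * T₂) / (η₁ + η₂)*(2*(d:ℝ)) + 2*s) * Qk d η₁ η₂ T₁ T₂ 1 T s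
        + ((d:ℝ) - (η₁+η₂)) * Qk d η₁ η₂ T₁ T₂ 0 T s) := by
    apply intervalIntegral.integral_congr
    intro T hT
    rw [Set.uIcc_of_le hT₁₂.le] at hT
    have hTpos : 0 < T := lt_of_lt_of_le hT₁ hT.1
    have hTne : T ≠ 0 := ne_of_gt hTpos
    have hηne : η₁ + η₂ ≠ 0 := by positivity
    simp only [P, Qk]
    field_simp
    ring
  rw [key, intervalIntegral.integral_add, intervalIntegral.integral_add,
    intervalIntegral.integral_const_mul, intervalIntegral.integral_const_mul,
    intervalIntegral.integral_const_mul]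
  · rw [Gk, Gk, Gk]; ring
  · exact h2.const_mul _
  · exact h1.const_mul _
  · exact (h2.const_mul _).add (h1.const_mul _)
  · exact h0.const_mul _


end Qlemmas

lemma norm_expand {d : ℕ} (v : EuclideanSpace ℝ (Fin d)) (i : Fin d) (t : ℝ) :
    ‖v + t • EuclideanSpace.single i (1:ℝ)‖^2 = ‖v‖^2 + 2*(v i)*t + t^2 := by
  rw [norm_add_sq_real, real_inner_smul_right, norm_smul]
  have h1 : (inner ℝ v (EuclideanSpace.single i (1:ℝ)) : ℝ) = v i := by
    rw [EuclideanSpace.inner_single_right]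
    simp
  rw [h1]
  simp [Real.norm_eq_abs, mul_pow, sq_abs]
  ring

lemma sum_sq {d : ℕ} (v : EuclideanSpace ℝ (Fin d)) :
    ∑ i, (v i)^2 = ‖v‖^2 := by
  rw [EuclideanSpace.norm_eq, Real.sq_sqrt (by positivity)]
  simp [sq_abs]


end FP
end FPsection

open MeasureTheory Real

/-- Theorem 2.2 (steady state formula): `g(v) = ∫_{T₁}^{T₂} w(T) m_T(v) dT` is a
`C²` steady state of the spatially homogeneous thermostatted kinetic
Fokker–Planck equation: `T∞ Δg + div(v g) + η₁ m_{T₁} + η₂ m_{T₂} - η g = 0`. -/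
theorem fokker_planck_steady_state
    (d : ℕ) (hd : 1 ≤ d)
    (T₁ T₂ : ℝ) (hT₁ : 0 < T₁) (hT₁₂ : T₁ < T₂)
    (η₁ η₂ : ℝ) (hη₁ : 0 < η₁) (hη₂ : 0 < η₂)
    (ηtot : ℝ) (hηtot : ηtot = η₁ + η₂)
    (Tinf : ℝ) (hTinf : Tinf = (η₁ * T₁ + η₂ * T₂) / ηtot)
    (g : EuclideanSpace ℝ (Fin d) → ℝ)
    (hg : ∀ v, g v = ∫ T in T₁..T₂, wdens η₁ η₂ T₁ T₂ T * maxwellian d T v) :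
    ContDiff ℝ 2 g ∧
    (∀ v : EuclideanSpace ℝ (Fin d),
      Tinf * lap d g v + ((∑ i, v i * coordDeriv d g i v) + d * g v) +
        η₁ * maxwellian d T₁ v + η₂ * maxwellian d T₂ v - ηtot * g v = 0) := by
  subst hηtot hTinf
  set G0 := FP.Gk d η₁ η₂ T₁ T₂ 0 with hG0def
  set G1 := FP.Gk d η₁ η₂ T₁ T₂ 1 with hG1def
  set G2 := FP.Gk d η₁ η₂ T₁ T₂ 2 with hG2def
  have hG0 : ∀ s, HasDerivAt G0 (G1 s) s := fun s => FP.hasDerivAt_Gk hT₁ hT₁₂ hη₁ hη₂ 0 s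
  have hG1 : ∀ s, HasDerivAt G1 (G2 s) s := fun s => FP.hasDerivAt_Gk hT₁ hT₁₂ hη₁ hη₂ 1 s
  have hG2 : ∀ s, HasDerivAt G2 (FP.Gk d η₁ η₂ T₁ T₂ 3 s) s :=
    fun s => FP.hasDerivAt_Gk hT₁ hT₁₂ hη₁ hη₂ 2 s
  have hgG : ∀ v : EuclideanSpace ℝ (Fin d), g v = G0 (‖v‖^2) := by
    intro v
    rw [hg, hG0def]
    apply intervalIntegral.integral_congr
    intro T _
    simp [FP.Qk, FP.q, maxwellian]
  -- function along coordinate lines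
  have hline : ∀ (v : EuclideanSpace ℝ (Fin d)) (i : Fin d),
      (fun t : ℝ => g (v + t • EuclideanSpace.single i (1:ℝ)))
        = fun t => G0 (‖v‖^2 + 2*(v i)*t + t^2) := by
    intro v i
    funext t
    rw [hgG, FP.norm_expand]
  have hphi : ∀ (v : EuclideanSpace ℝ (Fin d)) (i : Fin d) (t : ℝ),
      HasDerivAt (fun t : ℝ => ‖v‖^2 + 2*(v i)*t + t^2) (2*(v i) + 2*t) t := by
    intro v i t
    have h := (((hasDerivAt_id t).const_mul (2*(v i))).const_add (‖v‖^2)).add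
      (hasDerivAt_pow 2 t)
    exact h.congr_deriv (by norm_num)
  have hlineDeriv : ∀ (v : EuclideanSpace ℝ (Fin d)) (i : Fin d) (t : ℝ),
      HasDerivAt (fun t : ℝ => G0 (‖v‖^2 + 2*(v i)*t + t^2))
        (G1 (‖v‖^2 + 2*(v i)*t + t^2) * (2*(v i) + 2*t)) t := by
    intro v i t
    have := (hG0 (‖v‖^2 + 2*(v i)*t + t^2)).comp t (hphi v i t)
    simpa [Function.comp_def] using this
  have hcoord : ∀ (v : EuclideanSpace ℝ (Fin d)) (i : Fin d),
      coordDeriv d g i v = 2*(v i) * G1 (‖v‖^2) := by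
    intro v i
    rw [coordDeriv, hline v i]
    rw [(hlineDeriv v i 0).deriv]
    norm_num
    ring
  have hsecond : ∀ (v : EuclideanSpace ℝ (Fin d)) (i : Fin d),
      iteratedDeriv 2 (fun t : ℝ => g (v + t • EuclideanSpace.single i (1:ℝ))) 0
        = 4*(v i)^2 * G2 (‖v‖^2) + 2 * G1 (‖v‖^2) := by
    intro v i
    rw [hline v i, iteratedDeriv_succ, iteratedDeriv_one]
    have hd1 : deriv (fun t : ℝ => G0 (‖v‖^2 + 2*(v i)*t + t^2))
        = fun t => G1 (‖v‖^2 + 2*(v i)*t + t^2) * (2*(v i) + 2*t) :=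
      funext fun t => (hlineDeriv v i t).deriv
    rw [hd1]
    have h1 : HasDerivAt (fun t : ℝ => G1 (‖v‖^2 + 2*(v i)*t + t^2))
        (G2 (‖v‖^2 + 2*(v i)*0 + 0^2) * (2*(v i) + 2*0)) 0 := by
      have := (hG1 (‖v‖^2 + 2*(v i)*0 + 0^2)).comp 0 (hphi v i 0)
      simpa [Function.comp_def] using this
    have h2 : HasDerivAt (fun t : ℝ => 2*(v i) + 2*t) 2 0 := by
      simpa using ((hasDerivAt_id (0:ℝ)).const_mul 2).const_add (2*(v i))
    have := (h1.mul h2).deriv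
    refine this.trans ?_
    norm_num
    ring
  constructor
  · -- C² regularity
    have hCG : ContDiff ℝ 2 G0 := by
      rw [show (2 : WithTop ℕ∞) = 1 + 1 from rfl, contDiff_succ_iff_deriv]
      refine ⟨fun s => (hG0 s).differentiableAt, by simp, ?_⟩
      have : deriv G0 = G1 := funext fun s => (hG0 s).deriv
      rw [this, contDiff_one_iff_deriv]
      refine ⟨fun s => (hG1 s).differentiableAt, ?_⟩
      have : deriv G1 = G2 := funext fun s => (hG1 s).deriv
      rw [this]
      have hdG2 : Differentiable ℝ G2 := fun s => (hG2 s).differentiableAt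
      exact hdG2.continuous
    have hgfun : g = fun v => G0 (‖v‖^2) := funext hgG
    rw [hgfun]
    exact hCG.comp (contDiff_id.norm_sq (𝕜 := ℝ))
  · intro v
    have hlap : lap d g v = 4*(‖v‖^2)*G2 (‖v‖^2) + 2*(d:ℝ)*G1 (‖v‖^2) := by
      rw [lap]
      calc ∑ i : Fin d, iteratedDeriv 2
            (fun t : ℝ => g (v + t • EuclideanSpace.single i (1:ℝ))) 0
          = ∑ i : Fin d, (4*(v i)^2 * G2 (‖v‖^2) + 2 * G1 (‖v‖^2)) := by
            exact Finset.sum_congr rfl fun i _ => hsecond v i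
        _ = 4*(‖v‖^2)*G2 (‖v‖^2) + 2*(d:ℝ)*G1 (‖v‖^2) := by
            rw [Finset.sum_add_distrib, ← Finset.sum_mul, ← Finset.mul_sum]
            simp [FP.sum_sq v, Finset.card_univ]
            ring
    have hdot : (∑ i, v i * coordDeriv d g i v) = 2*(‖v‖^2)*G1 (‖v‖^2) := by
      calc (∑ i, v i * coordDeriv d g i v)
          = ∑ i, (2*(v i)^2 * G1 (‖v‖^2)) := by
            exact Finset.sum_congr rfl fun i _ => by rw [hcoord v i]; ring
        _ = 2*(‖v‖^2)*G1 (‖v‖^2) := by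
            rw [← Finset.sum_mul, ← Finset.mul_sum, FP.sum_sq v]
    have hm : ∀ T, maxwellian d T v = FP.q d T (‖v‖^2) := fun T => rfl
    rw [hlap, hdot, hgG v, hm T₁, hm T₂]
    have h1 := FP.lin (d := d) hT₁ hT₁₂ hη₁ hη₂ (‖v‖^2)
    have h2 := FP.ibp_total (d := d) hT₁ hT₁₂ hη₁ hη₂ (‖v‖^2)
    rw [← hG0def, ← hG1def, ← hG2def] at h1
    linarith [h1, h2]
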